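/- Let ξ > 0 be such that D_ξ := DᵀD − ξ²I is invertible, and let ω ≥ 0 be such that A(iω) is invertible. Then ξ is a singular value of G(iω), i.e. det(G(iω)* G(iω) − ξ² I) = 0, if and only if det H_ξ(iω) = 0. -/

import Mathlib

open Matrix Complex

noncomputable section

variable {n nu ny m : ℕ}


section Helpers

lemma map_mul_c {p q r : ℕ} (M : Matrix (Fin p) (Fin q) ℝ) (N : Matrix (Fin q) (Fin r) ℝ) :
    (M * N).map Complex.ofReal = M.map Complex.ofReal * N.map Complex.ofReal :=
  Matrix.map_mul (f := Complex.ofRealHom)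

lemma map_inv_c {p : ℕ} (M : Matrix (Fin p) (Fin p) ℝ) (h : IsUnit M.det) :
    (M⁻¹).map Complex.ofReal = (M.map Complex.ofReal)⁻¹ := by
  symm
  apply Matrix.inv_eq_right_inv
  rw [← map_mul_c, Matrix.mul_nonsing_inv _ h]
  exact Matrix.map_one _ Complex.ofReal_zero Complex.ofReal_one

lemma ct_map_c {p q : ℕ} (M : Matrix (Fin p) (Fin q) ℝ) :
    (M.map Complex.ofReal)ᴴ = Mᵀ.map Complex.ofReal := by
  ext i j
  simp [Matrix.conjTranspose_apply, Matrix.map_apply, Complex.conj_ofReal]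

lemma map_sub_c {p q : ℕ} (M N : Matrix (Fin p) (Fin q) ℝ) :
    (M - N).map Complex.ofReal = M.map Complex.ofReal - N.map Complex.ofReal := by
  ext i j; simp

lemma map_add_c {p q : ℕ} (M N : Matrix (Fin p) (Fin q) ℝ) :
    (M + N).map Complex.ofReal = M.map Complex.ofReal + N.map Complex.ofReal := by
  ext i j; simp

lemma map_neg_c {p q : ℕ} (M : Matrix (Fin p) (Fin q) ℝ) :
    (-M).map Complex.ofReal = -(M.map Complex.ofReal) := by
  ext i j; simp

lemma map_zero_c {p q : ℕ} : (0 : Matrix (Fin p) (Fin q) ℝ).map Complex.ofReal = 0 := by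
  ext i j; simp

lemma map_smul_c {p q : ℕ} (r : ℝ) (M : Matrix (Fin p) (Fin q) ℝ) :
    (r • M).map Complex.ofReal = (r : ℂ) • M.map Complex.ofReal := by
  ext i j; simp

lemma map_one_c {p : ℕ} : (1 : Matrix (Fin p) (Fin p) ℝ).map Complex.ofReal = 1 :=
  Matrix.map_one _ Complex.ofReal_zero Complex.ofReal_one

lemma fromBlocks_sum {l₁ l₂ o₁ o₂ : Type*} {R : Type*} [AddCommMonoid R] {ι : Type*}
    (s : Finset ι) (f : ι → Matrix l₁ o₁ R) (g : ι → Matrix l₁ o₂ R)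
    (h : ι → Matrix l₂ o₁ R) (k : ι → Matrix l₂ o₂ R) :
    ∑ i ∈ s, Matrix.fromBlocks (f i) (g i) (h i) (k i) =
      Matrix.fromBlocks (∑ i ∈ s, f i) (∑ i ∈ s, g i) (∑ i ∈ s, h i) (∑ i ∈ s, k i) := by
  induction s using Finset.cons_induction with
  | empty => simp
  | cons a s ha ih => simp [Finset.sum_cons, ih, Matrix.fromBlocks_add]

lemma fromBlocks_sub {l₁ l₂ o₁ o₂ : Type*} {R : Type*} [SubtractionMonoid R]
    (A A' : Matrix l₁ o₁ R) (B B' : Matrix l₁ o₂ R) (C C' : Matrix l₂ o₁ R)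
    (D D' : Matrix l₂ o₂ R) :
    Matrix.fromBlocks A B C D - Matrix.fromBlocks A' B' C' D' =
      Matrix.fromBlocks (A - A') (B - B') (C - C') (D - D') := by
  ext (i | i) (j | j) <;> simp [Matrix.fromBlocks]

end Helpers


/-- `D_ξ = Dᵀ D − ξ² I`. -/
def Dxi (D : Matrix (Fin ny) (Fin nu) ℝ) (ξ : ℝ) : Matrix (Fin nu) (Fin nu) ℝ :=
  Dᵀ * D - ξ ^ 2 • (1 : Matrix (Fin nu) (Fin nu) ℝ)

/-- `(Dᵀ)_ξ = D Dᵀ − ξ² I`, the matrix denoted `D_ξ^{-T}`-inverse base in the paper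
(the only dimensionally consistent reading of the `(2,1)` block of `M₀`).
Note that it is invertible iff `D_ξ` is (for `ξ ≠ 0`), since `DᵀD` and `DDᵀ` have the
same nonzero eigenvalues. -/
def DxiT (D : Matrix (Fin ny) (Fin nu) ℝ) (ξ : ℝ) : Matrix (Fin ny) (Fin ny) ℝ :=
  D * Dᵀ - ξ ^ 2 • (1 : Matrix (Fin ny) (Fin ny) ℝ)

/-- The block matrix `M₀`. -/
def Mzero (A0 : Matrix (Fin n) (Fin n) ℝ) (B : Matrix (Fin n) (Fin nu) ℝ)
    (C : Matrix (Fin ny) (Fin n) ℝ) (D : Matrix (Fin ny) (Fin nu) ℝ) (ξ : ℝ) :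
    Matrix (Fin n ⊕ Fin n) (Fin n ⊕ Fin n) ℝ :=
  fromBlocks (A0 - B * (Dxi D ξ)⁻¹ * Dᵀ * C) (-(B * (Dxi D ξ)⁻¹ * Bᵀ))
    (ξ ^ 2 • (Cᵀ * (DxiT D ξ)⁻¹ * C)) (-A0ᵀ + Cᵀ * D * (Dxi D ξ)⁻¹ * Bᵀ)

/-- The block matrix `Mᵢ` for `1 ≤ i ≤ m`. -/
def Mpos (Ai : Matrix (Fin n) (Fin n) ℝ) : Matrix (Fin n ⊕ Fin n) (Fin n ⊕ Fin n) ℝ :=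
  fromBlocks Ai 0 0 0

/-- The block matrix `M₋ᵢ` for `1 ≤ i ≤ m`. -/
def Mneg (Ai : Matrix (Fin n) (Fin n) ℝ) : Matrix (Fin n ⊕ Fin n) (Fin n ⊕ Fin n) ℝ :=
  fromBlocks 0 0 0 (-Aiᵀ)

/-- `H_ξ(λ) = λI − M₀ − Σᵢ (Mᵢ e^{−λτᵢ} + M₋ᵢ e^{λτᵢ})`. -/
def Hxi (A0 : Matrix (Fin n) (Fin n) ℝ) (A : Fin m → Matrix (Fin n) (Fin n) ℝ)
    (B : Matrix (Fin n) (Fin nu) ℝ) (C : Matrix (Fin ny) (Fin n) ℝ)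
    (D : Matrix (Fin ny) (Fin nu) ℝ) (τ : Fin m → ℝ) (ξ : ℝ) (lam : ℂ) :
    Matrix (Fin n ⊕ Fin n) (Fin n ⊕ Fin n) ℂ :=
  lam • (1 : Matrix (Fin n ⊕ Fin n) (Fin n ⊕ Fin n) ℂ)
    - (Mzero A0 B C D ξ).map Complex.ofReal
    - ∑ i : Fin m, (Complex.exp (-lam * (τ i : ℂ)) • (Mpos (A i)).map Complex.ofReal
        + Complex.exp (lam * (τ i : ℂ)) • (Mneg (A i)).map Complex.ofReal)

/-- `A(λ) = λI − A₀ − Σᵢ Aᵢ e^{−λτᵢ}`. -/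
def Amat (A0 : Matrix (Fin n) (Fin n) ℝ) (A : Fin m → Matrix (Fin n) (Fin n) ℝ)
    (τ : Fin m → ℝ) (lam : ℂ) : Matrix (Fin n) (Fin n) ℂ :=
  lam • (1 : Matrix (Fin n) (Fin n) ℂ) - A0.map Complex.ofReal
    - ∑ i : Fin m, Complex.exp (-lam * (τ i : ℂ)) • (A i).map Complex.ofReal

/-- The transfer function `G(λ) = C A(λ)⁻¹ B + D`. -/
def Gmat (A0 : Matrix (Fin n) (Fin n) ℝ) (A : Fin m → Matrix (Fin n) (Fin n) ℝ)
    (B : Matrix (Fin n) (Fin nu) ℝ) (C : Matrix (Fin ny) (Fin n) ℝ)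
    (D : Matrix (Fin ny) (Fin nu) ℝ) (τ : Fin m → ℝ) (lam : ℂ) :
    Matrix (Fin ny) (Fin nu) ℂ :=
  C.map Complex.ofReal * (Amat A0 A τ lam)⁻¹ * B.map Complex.ofReal + D.map Complex.ofReal

/-- `τ_max`, the maximum of the delays. -/
def tauMax [NeZero m] (τ : Fin m → ℝ) : ℝ :=
  Finset.univ.sup' Finset.univ_nonempty τ

/-- `λ` is an eigenvalue of the infinite-dimensional operator `L_ξ`: there is a continuously
differentiable, not identically zero function `u : [−τ_max, τ_max] → ℂ^{2n}` with
`u′(t) = λ u(t)` on the interval and `u′(0) = M₀ u(0) + Σᵢ (Mᵢ u(−τᵢ) + M₋ᵢ u(τᵢ))`. -/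
def IsEigLxi [NeZero m] (A0 : Matrix (Fin n) (Fin n) ℝ) (A : Fin m → Matrix (Fin n) (Fin n) ℝ)
    (B : Matrix (Fin n) (Fin nu) ℝ) (C : Matrix (Fin ny) (Fin n) ℝ)
    (D : Matrix (Fin ny) (Fin nu) ℝ) (τ : Fin m → ℝ) (ξ : ℝ) (lam : ℂ) : Prop :=
  ∃ u : ℝ → (Fin n ⊕ Fin n → ℂ),
    (∀ t ∈ Set.Icc (-(tauMax τ)) (tauMax τ),
      HasDerivWithinAt u (lam • u t) (Set.Icc (-(tauMax τ)) (tauMax τ)) t) ∧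
    (∃ t ∈ Set.Icc (-(tauMax τ)) (tauMax τ), u t ≠ 0) ∧
    lam • u 0 = (Mzero A0 B C D ξ).map Complex.ofReal *ᵥ u 0
      + ∑ i : Fin m, ((Mpos (A i)).map Complex.ofReal *ᵥ u (-(τ i))
          + (Mneg (A i)).map Complex.ofReal *ᵥ u (τ i))


set_option maxHeartbeats 2000000 in
/-- for `ξ > 0` with `D_ξ` invertible and `ω ≥ 0` with `A(iω)` invertible,
`ξ` is a singular value of `G(iω)` iff `det H_ξ(iω) = 0`. -/
theorem singular_value_iff_det_Hxi_eq_zero [NeZero n] [NeZero nu] [NeZero ny] [NeZero m]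
    (A0 : Matrix (Fin n) (Fin n) ℝ) (A : Fin m → Matrix (Fin n) (Fin n) ℝ)
    (B : Matrix (Fin n) (Fin nu) ℝ) (C : Matrix (Fin ny) (Fin n) ℝ)
    (D : Matrix (Fin ny) (Fin nu) ℝ) (τ : Fin m → ℝ)
    (ξ : ℝ) (hξ : 0 < ξ) (hD : IsUnit (Dxi D ξ))
    (ω : ℝ) (hω : 0 ≤ ω) (hA : IsUnit (Amat A0 A τ (Complex.I * ω))) :
    ((Gmat A0 A B C D τ (Complex.I * ω))ᴴ * Gmat A0 A B C D τ (Complex.I * ω)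
        - ((ξ : ℂ) ^ 2) • 1).det = 0
      ↔ (Hxi A0 A B C D τ ξ (Complex.I * ω)).det = 0 := by
  set lam : ℂ := Complex.I * ω with hlam
  set Bc := B.map Complex.ofReal with hBc
  set Cc := C.map Complex.ofReal with hCc
  set Dc := D.map Complex.ofReal with hDc
  set Btc := Bᵀ.map Complex.ofReal with hBtc
  set Ctc := Cᵀ.map Complex.ofReal with hCtc
  set Dtc := Dᵀ.map Complex.ofReal with hDtc
  set A0c := A0.map Complex.ofReal with hA0c
  set A0tc := A0ᵀ.map Complex.ofReal with hA0tc
  set Ec := (Dxi D ξ).map Complex.ofReal with hEcd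
  set Fc := (DxiT D ξ).map Complex.ofReal with hFcd
  set K := Amat A0 A τ lam with hKdef
  set G := Gmat A0 A B C D τ lam with hGdef
  -- basic nonvanishing facts
  have hξ2 : (ξ ^ 2 : ℝ) ≠ 0 := pow_ne_zero _ (ne_of_gt hξ)
  have hnξ2 : (-(ξ ^ 2) : ℝ) ≠ 0 := neg_ne_zero.mpr hξ2
  have hDdet : IsUnit (Dxi D ξ).det := (Matrix.isUnit_iff_isUnit_det _).mp hD
  have hDdet' : (Dxi D ξ).det ≠ 0 := by
    simpa using hDdet.ne_zero
  -- `DxiT` is invertible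
  have e1 : Dxi D ξ = (-(ξ ^ 2)) • (1 + Dᵀ * ((-(ξ ^ 2))⁻¹ • D)) := by
    rw [Dxi, Matrix.mul_smul, smul_add, smul_smul, mul_inv_cancel₀ hnξ2, one_smul, neg_smul,
      neg_add_eq_sub]
  have e2 : DxiT D ξ = (-(ξ ^ 2)) • (1 + ((-(ξ ^ 2))⁻¹ • D) * Dᵀ) := by
    rw [DxiT, Matrix.smul_mul, smul_add, smul_smul, mul_inv_cancel₀ hnξ2, one_smul, neg_smul,
      neg_add_eq_sub]
  have dcomm : (1 + Dᵀ * ((-(ξ ^ 2))⁻¹ • D)).det = (1 + ((-(ξ ^ 2))⁻¹ • D) * Dᵀ).det :=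
    Matrix.det_one_add_mul_comm _ _
  have hDT' : (DxiT D ξ).det ≠ 0 := by
    have h1 : (1 + Dᵀ * ((-(ξ ^ 2))⁻¹ • D)).det ≠ 0 := by
      intro hcon
      apply hDdet'
      rw [e1, Matrix.det_smul, hcon, mul_zero]
    rw [e2, Matrix.det_smul, ← dcomm]
    exact mul_ne_zero (pow_ne_zero _ hnξ2) h1
  have hDTdet : IsUnit (DxiT D ξ).det := isUnit_iff_ne_zero.mpr hDT'
  -- complex determinants
  have hEdetC : Ec.det ≠ 0 := by
    have : Ec.det = ((Dxi D ξ).det : ℂ) := ((RingHom.map_det Complex.ofRealHom _)).symm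
    rw [this]
    exact_mod_cast hDdet'
  have hFdetC : Fc.det ≠ 0 := by
    have : Fc.det = ((DxiT D ξ).det : ℂ) := ((RingHom.map_det Complex.ofRealHom _)).symm
    rw [this]
    exact_mod_cast hDT'
  have hEunit : IsUnit Ec.det := isUnit_iff_ne_zero.mpr hEdetC
  have hFunit : IsUnit Fc.det := isUnit_iff_ne_zero.mpr hFdetC
  have hKunit : IsUnit K.det := (Matrix.isUnit_iff_isUnit_det _).mp hA
  have hKdet' : K.det ≠ 0 := by simpa using hKunit.ne_zero
  have hKHunit : IsUnit (Kᴴ).det := by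
    rw [Matrix.det_conjTranspose]
    exact isUnit_iff_ne_zero.mpr (star_ne_zero.mpr hKdet')
  have hKHdet' : (Kᴴ).det ≠ 0 := by simpa using hKHunit.ne_zero
  -- block identities for Ec, Fc
  have hEcEq : Ec = Dtc * Dc - (ξ : ℂ) ^ 2 • 1 := by
    rw [hEcd, Dxi, map_sub_c, map_mul_c, map_smul_c, map_one_c, hDtc, hDc]
    norm_cast
  have hFcEq : Fc = Dc * Dtc - (ξ : ℂ) ^ 2 • 1 := by
    rw [hFcd, DxiT, map_sub_c, map_mul_c, map_smul_c, map_one_c, hDtc, hDc]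
    norm_cast
  -- the key relation ξ²Fc⁻¹ = Dc Ec⁻¹ Dtc − 1
  have hDcE : Dc * Ec = Fc * Dc := by
    rw [hEcEq, hFcEq]
    simp [Matrix.mul_sub, Matrix.sub_mul, Matrix.mul_smul, Matrix.smul_mul, Matrix.mul_assoc]
  have h2 : Fc⁻¹ * Dc = Dc * Ec⁻¹ := by
    calc Fc⁻¹ * Dc = Fc⁻¹ * Dc * (Ec * Ec⁻¹) := by
          rw [Matrix.mul_nonsing_inv _ hEunit, Matrix.mul_one]
      _ = Fc⁻¹ * (Dc * Ec) * Ec⁻¹ := by simp only [Matrix.mul_assoc]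
      _ = Fc⁻¹ * (Fc * Dc) * Ec⁻¹ := by rw [hDcE]
      _ = Fc⁻¹ * Fc * (Dc * Ec⁻¹) := by simp only [Matrix.mul_assoc]
      _ = Dc * Ec⁻¹ := by rw [Matrix.nonsing_inv_mul _ hFunit, Matrix.one_mul]
  have hrel : (ξ : ℂ) ^ 2 • Fc⁻¹ = Dc * Ec⁻¹ * Dtc - 1 := by
    have step : Dc * Ec⁻¹ * Dtc - 1 = Fc⁻¹ * (Dc * Dtc - Fc) := by
      rw [← h2, Matrix.mul_sub, Matrix.nonsing_inv_mul _ hFunit]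
      simp [Matrix.mul_assoc]
    rw [step, hFcEq, sub_sub_cancel, Matrix.mul_smul, Matrix.mul_one]
  -- conjugates
  have hstarC : (starRingEnd ℂ) lam = -lam := by
    rw [hlam]
    simp [Complex.conj_ofReal]
  have hstar : star lam = -lam := hstarC
  have hstarexp : ∀ i : Fin m, star (Complex.exp (-lam * (τ i : ℂ)))
      = Complex.exp (lam * (τ i : ℂ)) := by
    intro i
    show (starRingEnd ℂ) (Complex.exp (-lam * (τ i : ℂ))) = _
    rw [← Complex.exp_conj]
    congr 1
    simp [hstarC, Complex.conj_ofReal]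
  have hKH : Kᴴ = -(lam • (1 : Matrix (Fin n) (Fin n) ℂ)) - A0tc
      - ∑ i : Fin m, Complex.exp (lam * (τ i : ℂ)) • (A i)ᵀ.map Complex.ofReal := by
    rw [hKdef, Amat]
    rw [Matrix.conjTranspose_sub, Matrix.conjTranspose_sub, Matrix.conjTranspose_smul,
      Matrix.conjTranspose_one, ct_map_c, Matrix.conjTranspose_sum]
    rw [hstar, neg_smul, hA0tc]
    congr 1
    refine Finset.sum_congr rfl fun i _ => ?_
    rw [Matrix.conjTranspose_smul, hstarexp i, ct_map_c]
  -- block form of Hxi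
  have hM0 : (Mzero A0 B C D ξ).map Complex.ofReal =
      fromBlocks (A0c - Bc * Ec⁻¹ * Dtc * Cc) (-(Bc * Ec⁻¹ * Btc))
        ((ξ : ℂ) ^ 2 • (Ctc * Fc⁻¹ * Cc)) (-A0tc + Ctc * Dc * Ec⁻¹ * Btc) := by
    rw [Mzero, Matrix.fromBlocks_map]
    refine Matrix.fromBlocks_inj.mpr ⟨?_, ?_, ?_, ?_⟩
    · rw [map_sub_c, map_mul_c, map_mul_c, map_mul_c, map_inv_c _ hDdet,
        hA0c, hBc, hEcd, hDtc, hCc]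
    · rw [map_neg_c, map_mul_c, map_mul_c, map_inv_c _ hDdet, hBc, hEcd, hBtc]
    · rw [map_smul_c, map_mul_c, map_mul_c, map_inv_c _ hDTdet, hCtc, hFcd, hCc]
      norm_cast
    · rw [map_add_c, map_neg_c, map_mul_c, map_mul_c, map_mul_c, map_inv_c _ hDdet,
        hA0tc, hCtc, hDc, hEcd, hBtc]
  have hMposmap : ∀ i : Fin m, (Mpos (A i)).map Complex.ofReal =
      fromBlocks ((A i).map Complex.ofReal) 0 0 0 := by
    intro i
    rw [Mpos, Matrix.fromBlocks_map, map_zero_c]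
  have hMnegmap : ∀ i : Fin m, (Mneg (A i)).map Complex.ofReal =
      fromBlocks 0 0 0 (-((A i)ᵀ.map Complex.ofReal)) := by
    intro i
    rw [Mneg, Matrix.fromBlocks_map, map_zero_c, map_neg_c]
  have hsum : (∑ i : Fin m, (Complex.exp (-lam * (τ i : ℂ)) • (Mpos (A i)).map Complex.ofReal
        + Complex.exp (lam * (τ i : ℂ)) • (Mneg (A i)).map Complex.ofReal)) =
      fromBlocks (∑ i : Fin m, Complex.exp (-lam * (τ i : ℂ)) • (A i).map Complex.ofReal) 0 0
        (-(∑ i : Fin m, Complex.exp (lam * (τ i : ℂ)) • (A i)ᵀ.map Complex.ofReal)) := by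
    have hterm : ∀ i : Fin m,
        (Complex.exp (-lam * (τ i : ℂ)) • (Mpos (A i)).map Complex.ofReal
          + Complex.exp (lam * (τ i : ℂ)) • (Mneg (A i)).map Complex.ofReal) =
        fromBlocks (Complex.exp (-lam * (τ i : ℂ)) • (A i).map Complex.ofReal) 0 0
          (-(Complex.exp (lam * (τ i : ℂ)) • (A i)ᵀ.map Complex.ofReal)) := by
      intro i
      rw [hMposmap i, hMnegmap i, Matrix.fromBlocks_smul, Matrix.fromBlocks_smul,
        Matrix.fromBlocks_add]
      simp [smul_neg]
    rw [Finset.sum_congr rfl fun i _ => hterm i, fromBlocks_sum]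
    simp
  have hone2n : lam • (1 : Matrix (Fin n ⊕ Fin n) (Fin n ⊕ Fin n) ℂ) =
      fromBlocks (lam • 1) 0 0 (lam • 1) := by
    rw [← Matrix.fromBlocks_one, Matrix.fromBlocks_smul, smul_zero]
  have hH : Hxi A0 A B C D τ ξ lam =
      fromBlocks (K + Bc * Ec⁻¹ * Dtc * Cc) (Bc * Ec⁻¹ * Btc)
        (-((ξ : ℂ) ^ 2 • (Ctc * Fc⁻¹ * Cc))) (-(Kᴴ) - Ctc * Dc * Ec⁻¹ * Btc) := by
    rw [Hxi, hM0, hsum, hone2n, fromBlocks_sub, fromBlocks_sub]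
    refine Matrix.fromBlocks_inj.mpr ⟨?_, ?_, ?_, ?_⟩
    · rw [hKdef, Amat]
      abel
    · abel
    · abel
    · rw [hKH]
      abel
  -- the rank-one-style decomposition  H = T + U (Ec⁻¹ V)
  set T := fromBlocks K 0 (Ctc * Cc) (-(Kᴴ)) with hT
  set Tinv := fromBlocks K⁻¹ 0 ((Kᴴ)⁻¹ * (Ctc * Cc) * K⁻¹) (-((Kᴴ)⁻¹)) with hTinv
  set U := fromRows Bc (-(Ctc * Dc)) with hU
  set V := fromCols (Dtc * Cc) Btc with hV
  have hHeq : Hxi A0 A B C D τ ξ lam = T + U * (Ec⁻¹ * V) := by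
    rw [hH, hT, hU, hV, Matrix.mul_fromCols, Matrix.fromRows_mul_fromCols,
      Matrix.fromBlocks_add]
    refine Matrix.fromBlocks_inj.mpr ⟨?_, ?_, ?_, ?_⟩
    · simp [Matrix.mul_assoc]
    · simp [Matrix.mul_assoc]
    · have h21 : Ctc * ((ξ : ℂ) ^ 2 • Fc⁻¹) * Cc = Ctc * (Dc * Ec⁻¹ * Dtc - 1) * Cc := by
        rw [hrel]
      rw [Matrix.mul_smul, Matrix.smul_mul] at h21
      rw [h21]
      simp only [Matrix.mul_sub, Matrix.sub_mul, Matrix.mul_one, Matrix.neg_mul,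
        Matrix.mul_assoc, neg_sub]
      abel
    · simp only [Matrix.neg_mul, Matrix.mul_assoc, sub_eq_add_neg]
  have hTTinv : T * Tinv = 1 := by
    rw [hT, hTinv, Matrix.fromBlocks_multiply, ← Matrix.fromBlocks_one]
    refine Matrix.fromBlocks_inj.mpr ⟨?_, ?_, ?_, ?_⟩
    · simp [Matrix.mul_nonsing_inv _ hKunit]
    · simp
    · simp [Matrix.neg_mul, Matrix.mul_assoc,
        Matrix.mul_nonsing_inv_cancel_left _ _ hKHunit]
    · simp [Matrix.mul_nonsing_inv _ hKHunit]
  have hfact : Hxi A0 A B C D τ ξ lam = T * (1 + Tinv * U * (Ec⁻¹ * V)) := by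
    have haux : T * (Tinv * U * (Ec⁻¹ * V)) = U * (Ec⁻¹ * V) := by
      calc T * (Tinv * U * (Ec⁻¹ * V)) = T * Tinv * (U * (Ec⁻¹ * V)) := by
            simp only [Matrix.mul_assoc]
        _ = U * (Ec⁻¹ * V) := by rw [hTTinv, Matrix.one_mul]
    rw [Matrix.mul_add, Matrix.mul_one, haux, hHeq]
  have hdet1 : (Hxi A0 A B C D τ ξ lam).det =
      T.det * (1 + (Ec⁻¹ * V) * (Tinv * U)).det := by
    rw [hfact, Matrix.det_mul, Matrix.det_one_add_mul_comm]
  have hGH : Gᴴ = Btc * (Kᴴ)⁻¹ * Ctc + Dtc := by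
    rw [hGdef, Gmat, ← hKdef]
    rw [Matrix.conjTranspose_add, Matrix.conjTranspose_mul, Matrix.conjTranspose_mul,
      Matrix.conjTranspose_nonsing_inv, ct_map_c, ct_map_c, ct_map_c]
    rw [← hBtc, ← hCtc, ← hDtc]
    simp [Matrix.mul_assoc]
  have hVTU : (Ec⁻¹ * V) * (Tinv * U) = Ec⁻¹ * (Gᴴ * G - Dtc * Dc) := by
    rw [hV, hTinv, hU, Matrix.mul_fromCols, Matrix.fromBlocks_mul_fromRows,
      Matrix.fromCols_mul_fromRows, hGH, hGdef, Gmat, ← hKdef, ← hBc, ← hCc, ← hDc]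
    simp only [Matrix.mul_add, Matrix.add_mul, Matrix.mul_sub, Matrix.sub_mul,
      Matrix.neg_mul, Matrix.mul_neg, Matrix.mul_zero, Matrix.zero_mul, Matrix.mul_assoc,
      neg_neg, add_zero, zero_add]
    abel
  have hone : (1 : Matrix (Fin nu) (Fin nu) ℂ) + Ec⁻¹ * (Gᴴ * G - Dtc * Dc) =
      Ec⁻¹ * (Gᴴ * G - (ξ : ℂ) ^ 2 • 1) := by
    have h1 : Ec⁻¹ * Ec = 1 := Matrix.nonsing_inv_mul _ hEunit
    calc (1 : Matrix (Fin nu) (Fin nu) ℂ) + Ec⁻¹ * (Gᴴ * G - Dtc * Dc)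
        = Ec⁻¹ * (Ec + (Gᴴ * G - Dtc * Dc)) := by rw [Matrix.mul_add, h1]
      _ = Ec⁻¹ * (Gᴴ * G - (ξ : ℂ) ^ 2 • 1) := by
          rw [hEcEq]
          congr 1
          abel
  have hTdet : T.det ≠ 0 := by
    rw [hT, Matrix.det_fromBlocks_zero₁₂]
    refine mul_ne_zero hKdet' ?_
    rw [Matrix.det_neg]
    exact mul_ne_zero (pow_ne_zero _ (by norm_num)) hKHdet'
  have hEinvdet : (Ec⁻¹).det ≠ 0 := by
    rw [Matrix.det_nonsing_inv, Ring.inverse_eq_inv']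
    exact inv_ne_zero hEdetC
  rw [hdet1, hVTU, hone, Matrix.det_mul]
  simp [mul_eq_zero, hTdet, hEinvdet]
  exact fun h => absurd h hEdetC
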